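/- For |q|<1 and |ζ|<1 with ζq^{2m} ≠ 1 for all m ≥ 1: (1+q) Σ_{n≥0} (−q)^n/(ζq²;q²)_n = Σ_{n≥0} (−qζ)^n q^{2n²} / ((ζq²;q²)_n (−q³;q²)_n), i.e., (1+q) F(0,ζ;−q;q²) = R(ζ,−q;q²). -/

import Mathlib

open Complex

/-- The q-Pochhammer symbol `(a;q)_n = ∏_{j=0}^{n-1} (1 - a q^j)`. -/
noncomputable def qPoch (a q : ℂ) (n : ℕ) : ℂ := ∏ j ∈ Finset.range n, (1 - a * q ^ j)

section Aux
open Filter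

lemma qPoch_succ (a q : ℂ) (n : ℕ) :
    qPoch a q (n + 1) = qPoch a q n * (1 - a * q ^ n) := Finset.prod_range_succ _ _

lemma qPoch_succ' (a q : ℂ) (n : ℕ) :
    qPoch a q (n + 1) = (1 - a) * qPoch (a * q) q n := by
  rw [qPoch, Finset.prod_range_succ', qPoch, mul_comm]
  congr 1
  · simp
  · exact Finset.prod_congr rfl fun j _ => by rw [pow_succ']; ring

lemma exp_factor_le (a u : ℝ) (hu0 : 0 ≤ u) (hua : u ≤ a) (ha : a < 1) :
    Real.exp (-(u / (1 - a))) ≤ 1 - u := by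
  have hu1 : u < 1 := lt_of_le_of_lt hua ha
  have h1u : (0:ℝ) < 1 - u := by linarith
  have h1a : (0:ℝ) < 1 - a := by linarith
  have step1 : u / (1 - u) ≤ u / (1 - a) :=
    div_le_div_of_nonneg_left hu0 h1a (by linarith)
  have step2 : (1 - u)⁻¹ ≤ Real.exp (u / (1 - u)) := by
    have h := Real.add_one_le_exp (u / (1 - u))
    have h2 : u / (1 - u) + 1 = (1 - u)⁻¹ := by field_simp; ring
    linarith
  calc Real.exp (-(u / (1 - a))) ≤ Real.exp (-(u / (1 - u))) := by
        apply Real.exp_le_exp.mpr; linarith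
    _ = (Real.exp (u / (1 - u)))⁻¹ := by rw [Real.exp_neg]
    _ ≤ ((1 - u)⁻¹)⁻¹ := inv_anti₀ (by positivity) step2
    _ = 1 - u := inv_inv _

lemma prod_lower_bound (a r : ℝ) (ha0 : 0 ≤ a) (ha : a < 1) (hr0 : 0 ≤ r) (hr : r < 1) :
    ∀ n : ℕ, Real.exp (-(a / ((1 - a) * (1 - r)))) ≤ ∏ j ∈ Finset.range n, (1 - a * r ^ j) := by
  intro n
  have h1a : (0:ℝ) < 1 - a := by linarith
  have h1r : (0:ℝ) < 1 - r := by linarith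
  have hfac : ∀ j : ℕ, Real.exp (-(a * r ^ j / (1 - a))) ≤ 1 - a * r ^ j := fun j =>
    exp_factor_le a (a * r ^ j) (by positivity)
      (by nlinarith [pow_le_one₀ hr0 hr.le (n := j), pow_nonneg hr0 j]) ha
  have hgeom : ∑ j ∈ Finset.range n, r ^ j ≤ (1 - r)⁻¹ := by
    have h := Summable.sum_le_tsum (Finset.range n) (fun i _ => pow_nonneg hr0 i)
      (summable_geometric_of_lt_one hr0 hr)
    rwa [tsum_geometric_of_lt_one hr0 hr] at h
  have hsum : ∑ j ∈ Finset.range n, a * r ^ j / (1 - a) ≤ a / ((1 - a) * (1 - r)) := by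
    have e : ∑ j ∈ Finset.range n, a * r ^ j / (1 - a)
        = (a / (1 - a)) * ∑ j ∈ Finset.range n, r ^ j := by
      rw [Finset.mul_sum]; exact Finset.sum_congr rfl fun j _ => by ring
    rw [e]
    calc (a / (1 - a)) * ∑ j ∈ Finset.range n, r ^ j
        ≤ (a / (1 - a)) * (1 - r)⁻¹ := mul_le_mul_of_nonneg_left hgeom (by positivity)
      _ = a / ((1 - a) * (1 - r)) := by field_simp
  calc Real.exp (-(a / ((1 - a) * (1 - r))))
      ≤ Real.exp (∑ j ∈ Finset.range n, -(a * r ^ j / (1 - a))) := by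
        apply Real.exp_le_exp.mpr
        rw [Finset.sum_neg_distrib]
        linarith
    _ = ∏ j ∈ Finset.range n, Real.exp (-(a * r ^ j / (1 - a))) := Real.exp_sum _ _
    _ ≤ ∏ j ∈ Finset.range n, (1 - a * r ^ j) :=
        Finset.prod_le_prod (fun j _ => (Real.exp_pos _).le) (fun j _ => hfac j)

lemma qPoch_norm_lower (Q : ℂ) (a : ℝ) (hQ : ‖Q‖ < 1) (ha0 : 0 ≤ a) (ha : a < 1) :
    ∀ (y : ℂ), ‖y‖ ≤ a → ∀ n : ℕ,
      Real.exp (-(a / ((1 - a) * (1 - ‖Q‖)))) ≤ ‖qPoch y Q n‖ := by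
  intro y hy n
  calc Real.exp (-(a / ((1 - a) * (1 - ‖Q‖))))
      ≤ ∏ j ∈ Finset.range n, (1 - a * ‖Q‖ ^ j) :=
        prod_lower_bound a ‖Q‖ ha0 ha (norm_nonneg Q) hQ n
    _ ≤ ‖qPoch y Q n‖ := by
        rw [qPoch, norm_prod]
        apply Finset.prod_le_prod
        · intro j _
          nlinarith [pow_le_one₀ (norm_nonneg Q) hQ.le (n := j), pow_nonneg (norm_nonneg Q) j]
        · intro j _
          calc (1:ℝ) - a * ‖Q‖ ^ j ≤ 1 - ‖y * Q ^ j‖ := by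
                rw [norm_mul, norm_pow]
                nlinarith [pow_nonneg (norm_nonneg Q) j, norm_nonneg y,
                  pow_le_one₀ (norm_nonneg Q) hQ.le (n := j)]
            _ ≤ ‖(1:ℂ) - y * Q ^ j‖ := by
                have := norm_sub_norm_le (1:ℂ) (y * Q ^ j)
                simpa using this

lemma one_sub_ne (z : ℂ) (h : ‖z‖ < 1) : (1 : ℂ) - z ≠ 0 := by
  intro he
  have : z = 1 := by linear_combination -he
  rw [this] at h; simp at h

lemma qPoch_ne_zero (y Q : ℂ) (hy : ‖y‖ < 1) (hQ : ‖Q‖ < 1) (n : ℕ) :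
    qPoch y Q n ≠ 0 := by
  rw [qPoch]
  apply Finset.prod_ne_zero_iff.mpr
  intro j _
  apply one_sub_ne
  rw [norm_mul, norm_pow]
  calc ‖y‖ * ‖Q‖ ^ j ≤ ‖y‖ * 1 := by
        apply mul_le_mul_of_nonneg_left (pow_le_one₀ (norm_nonneg Q) hQ.le) (norm_nonneg y)
    _ = ‖y‖ := mul_one _
    _ < 1 := hy

lemma qPoch_summable (Q t x : ℂ) (hQ : ‖Q‖ < 1) (ht : ‖t‖ < 1) (hx : ‖x‖ < 1) :
    Summable (fun n : ℕ => t ^ n / qPoch x Q n) := by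
  set c := Real.exp (-(‖x‖ / ((1 - ‖x‖) * (1 - ‖Q‖)))) with hc
  have hcpos : 0 < c := Real.exp_pos _
  have hbd := qPoch_norm_lower Q ‖x‖ hQ (norm_nonneg x) hx x le_rfl
  apply Summable.of_norm_bounded (g := fun n => c⁻¹ * ‖t‖ ^ n)
    ((summable_geometric_of_lt_one (norm_nonneg t) ht).mul_left _)
  intro n
  rw [norm_div, norm_pow, div_eq_mul_inv, mul_comm]
  apply mul_le_mul_of_nonneg_right _ (pow_nonneg (norm_nonneg t) n)
  exact inv_anti₀ hcpos (hbd n)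

/-- The functional equation. -/
lemma fineFE (Q t x : ℂ) (hQ : ‖Q‖ < 1) (ht : ‖t‖ < 1) (hx : ‖x‖ < 1) :
    (1 - t) * ∑' n : ℕ, t ^ n / qPoch x Q n
      = 1 + (x * t / (1 - x)) * ∑' n : ℕ, (t * Q) ^ n / qPoch (x * Q) Q n := by
  have hP : ∀ n, qPoch x Q n ≠ 0 := qPoch_ne_zero x Q hx hQ
  have hxQ : ‖x * Q‖ < 1 := by
    rw [norm_mul]
    calc ‖x‖ * ‖Q‖ ≤ 1 * ‖Q‖ := mul_le_mul_of_nonneg_right hx.le (norm_nonneg Q)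
      _ = ‖Q‖ := one_mul _
      _ < 1 := hQ
  have hP' : ∀ n, qPoch (x * Q) Q n ≠ 0 := qPoch_ne_zero (x * Q) Q hxQ hQ
  have h1x : (1 : ℂ) - x ≠ 0 := one_sub_ne x hx
  set f : ℕ → ℂ := fun n => t ^ n / qPoch x Q n with hfdef
  have hsum : Summable f := qPoch_summable Q t x hQ ht hx
  have hsum1 : Summable (fun n => f (n + 1)) := (summable_nat_add_iff 1).mpr hsum
  have hsum2 : Summable (fun n => t * f n) := hsum.mul_left t
  have key : ∀ n : ℕ, f (n + 1) - t * f n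
      = (x * t / (1 - x)) * ((t * Q) ^ n / qPoch (x * Q) Q n) := by
    intro n
    have e1 : qPoch x Q (n + 1) = qPoch x Q n * (1 - x * Q ^ n) := qPoch_succ x Q n
    have e2 : qPoch x Q (n + 1) = (1 - x) * qPoch (x * Q) Q n := qPoch_succ' x Q n
    have hA : (1 : ℂ) - x * Q ^ n ≠ 0 := by
      have := hP (n + 1)
      rw [e1] at this
      exact fun h => this (by rw [h, mul_zero])
    have h5 : (x * t / (1 - x)) * ((t * Q) ^ n / qPoch (x * Q) Q n)
        = x * t ^ (n + 1) * Q ^ n / qPoch x Q (n + 1) := by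
      rw [e2, mul_pow]
      field_simp
      ring
    rw [h5]
    simp only [hfdef]
    rw [e1]
    have haux : ∀ (u P B : ℂ), P ≠ 0 → (1:ℂ) - B ≠ 0 →
        u / (P * (1 - B)) - u / P = u * B / (P * (1 - B)) := by
      intro u P B hPz hAz
      rw [div_sub_div _ _ (mul_ne_zero hPz hAz) hPz,
        div_eq_div_iff (mul_ne_zero (mul_ne_zero hPz hAz) hPz) (mul_ne_zero hPz hAz)]
      ring
    have := haux (t ^ (n + 1)) (qPoch x Q n) (x * Q ^ n) (hP n) hA
    calc t ^ (n + 1) / (qPoch x Q n * (1 - x * Q ^ n)) - t * (t ^ n / qPoch x Q n)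
        = t ^ (n + 1) / (qPoch x Q n * (1 - x * Q ^ n)) - t ^ (n + 1) / qPoch x Q n := by
          rw [mul_div_assoc' t (t ^ n) (qPoch x Q n), ← pow_succ']
      _ = t ^ (n + 1) * (x * Q ^ n) / (qPoch x Q n * (1 - x * Q ^ n)) := this
      _ = x * t ^ (n + 1) * Q ^ n / (qPoch x Q n * (1 - x * Q ^ n)) := by ring_nf
  calc (1 - t) * ∑' n, f n = ∑' n, f n - ∑' n, t * f n := by rw [tsum_mul_left]; ring
    _ = (1 + ∑' n, f (n + 1)) - ∑' n, t * f n := by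
        rw [Summable.tsum_eq_zero_add hsum]
        simp [hfdef, qPoch]
    _ = 1 + (∑' n, f (n + 1) - ∑' n, t * f n) := by ring
    _ = 1 + ∑' n, (f (n + 1) - t * f n) := by rw [Summable.tsum_sub hsum1 hsum2]
    _ = 1 + ∑' n, (x * t / (1 - x)) * ((t * Q) ^ n / qPoch (x * Q) Q n) := by
        rw [tsum_congr key]
    _ = 1 + (x * t / (1 - x)) * ∑' n, (t * Q) ^ n / qPoch (x * Q) Q n := by
        rw [tsum_mul_left]

noncomputable def fineS (Q x t : ℂ) : ℂ := ∑' n : ℕ, t ^ n / qPoch x Q n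
noncomputable def fineT (Q x t : ℂ) (k : ℕ) : ℂ :=
  (x * t) ^ k * Q ^ (k * (k - 1)) / (qPoch x Q k * qPoch (t * Q) Q k)

lemma norm_mul_pow_lt (z Q : ℂ) (hz : ‖z‖ < 1) (hQ : ‖Q‖ ≤ 1) (n : ℕ) : ‖z * Q ^ n‖ < 1 := by
  rw [norm_mul, norm_pow]
  calc ‖z‖ * ‖Q‖ ^ n ≤ ‖z‖ * 1 :=
        mul_le_mul_of_nonneg_left (pow_le_one₀ (norm_nonneg Q) hQ) (norm_nonneg z)
    _ = ‖z‖ := mul_one _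
    _ < 1 := hz

lemma fine_iterate (Q t x : ℂ) (hQ : ‖Q‖ < 1) (ht : ‖t‖ < 1) (hx : ‖x‖ < 1) (n : ℕ) :
    (1 - t) * fineS Q x t = ∑ k ∈ Finset.range n, fineT Q x t k
      + fineT Q x t n * ((1 - t * Q ^ n) * fineS Q (x * Q ^ n) (t * Q ^ n)) := by
  induction n with
  | zero => simp [fineT, qPoch]
  | succ n ih =>
    rw [ih, Finset.sum_range_succ]
    have hxn : ‖x * Q ^ n‖ < 1 := norm_mul_pow_lt x Q hx hQ.le n
    have htn : ‖t * Q ^ n‖ < 1 := norm_mul_pow_lt t Q ht hQ.le n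
    have htn1 : ‖t * Q ^ (n + 1)‖ < 1 := norm_mul_pow_lt t Q ht hQ.le (n + 1)
    have hFE := fineFE Q (t * Q ^ n) (x * Q ^ n) hQ htn hxn
    have hrw1 : x * Q ^ n * Q = x * Q ^ (n + 1) := by rw [pow_succ]; ring
    have hrw2 : t * Q ^ n * Q = t * Q ^ (n + 1) := by rw [pow_succ]; ring
    rw [hrw1, hrw2] at hFE
    have hSrw : (1 - t * Q ^ n) * fineS Q (x * Q ^ n) (t * Q ^ n)
        = 1 + (x * Q ^ n * (t * Q ^ n) / (1 - x * Q ^ n)) * fineS Q (x * Q ^ (n + 1)) (t * Q ^ (n + 1)) := by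
      rw [fineS, fineS, hFE]
    have hT : fineT Q x t n * (x * Q ^ n * (t * Q ^ n) / (1 - x * Q ^ n))
        = fineT Q x t (n + 1) * (1 - t * Q ^ (n + 1)) := by
      have hPn := qPoch_ne_zero x Q hx hQ n
      have htQ : ‖t * Q‖ < 1 := norm_mul_pow_lt t Q ht hQ.le 1 |>.trans_le' (by rw [pow_one])
      have hRn := qPoch_ne_zero (t * Q) Q htQ hQ n
      have hAn := one_sub_ne _ hxn
      have hBn := one_sub_ne _ htn1
      simp only [fineT, qPoch_succ]
      have hrw3 : (1 : ℂ) - t * Q * Q ^ n = 1 - t * Q ^ (n + 1) := by rw [pow_succ]; ring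
      rw [hrw3]
      have hexp : (n + 1) * ((n + 1) - 1) = n * (n - 1) + 2 * n := by
        cases n with
        | zero => rfl
        | succ m => simp only [Nat.succ_sub_one]; ring
      rw [hexp, pow_add, pow_succ]
      field_simp
      ring
    rw [hSrw]
    linear_combination hT * fineS Q (x * Q ^ (n + 1)) (t * Q ^ (n + 1))

lemma rogers_fine (Q t x : ℂ) (hQ : ‖Q‖ < 1) (ht : ‖t‖ < 1) (hx : ‖x‖ < 1) :
    (1 - t) * ∑' n : ℕ, t ^ n / qPoch x Q n
      = ∑' n : ℕ, (x * t) ^ n * Q ^ (n * (n - 1)) / (qPoch x Q n * qPoch (t * Q) Q n) := by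
  set a : ℝ := max ‖x‖ ‖t‖ with ha_def
  have ha0 : 0 ≤ a := le_trans (norm_nonneg x) (le_max_left _ _)
  have ha1 : a < 1 := max_lt hx ht
  set c : ℝ := Real.exp (-(a / ((1 - a) * (1 - ‖Q‖)))) with hc_def
  have hcpos : 0 < c := Real.exp_pos _
  have hlow := qPoch_norm_lower Q a hQ ha0 ha1
  have hQ1 : ∀ m : ℕ, ‖Q‖ ^ m ≤ 1 := fun m => pow_le_one₀ (norm_nonneg Q) hQ.le
  -- bound on fineT
  have hTbd : ∀ n : ℕ, ‖fineT Q x t n‖ ≤ c⁻¹ * c⁻¹ * ‖x * t‖ ^ n := by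
    intro n
    have h1 : c ≤ ‖qPoch x Q n‖ := hlow x (le_max_left _ _) n
    have h2 : c ≤ ‖qPoch (t * Q) Q n‖ := by
      apply hlow (t * Q) _ n
      rw [norm_mul]
      calc ‖t‖ * ‖Q‖ ≤ ‖t‖ * 1 := mul_le_mul_of_nonneg_left hQ.le (norm_nonneg t)
        _ = ‖t‖ := mul_one _
        _ ≤ a := le_max_right _ _
    rw [fineT, norm_div, norm_mul, norm_mul, norm_pow, norm_pow]
    calc ‖x * t‖ ^ n * ‖Q‖ ^ (n * (n - 1)) / (‖qPoch x Q n‖ * ‖qPoch (t * Q) Q n‖)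
        ≤ ‖x * t‖ ^ n * 1 / (c * c) := by
          apply div_le_div₀ (by positivity)
            (mul_le_mul_of_nonneg_left (hQ1 _) (pow_nonneg (norm_nonneg _) n))
            (by positivity)
            (mul_le_mul h1 h2 hcpos.le (norm_nonneg _))
      _ = c⁻¹ * c⁻¹ * ‖x * t‖ ^ n := by
          rw [mul_one, div_eq_mul_inv, mul_inv]; ring
  -- bound on the tails fineS
  have hSbd : ∀ n : ℕ, ‖fineS Q (x * Q ^ n) (t * Q ^ n)‖ ≤ c⁻¹ * (1 - ‖t‖)⁻¹ := by
    intro n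
    have hterm : ∀ m : ℕ, ‖(t * Q ^ n) ^ m / qPoch (x * Q ^ n) Q m‖ ≤ c⁻¹ * ‖t‖ ^ m := by
      intro m
      have h1 : c ≤ ‖qPoch (x * Q ^ n) Q m‖ := by
        apply hlow (x * Q ^ n) _ m
        rw [norm_mul, norm_pow]
        calc ‖x‖ * ‖Q‖ ^ n ≤ ‖x‖ * 1 := mul_le_mul_of_nonneg_left (hQ1 n) (norm_nonneg x)
          _ = ‖x‖ := mul_one _
          _ ≤ a := le_max_left _ _
      rw [norm_div, norm_pow]
      have h2 : ‖t * Q ^ n‖ ^ m ≤ ‖t‖ ^ m := by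
        apply pow_le_pow_left₀ (norm_nonneg _)
        rw [norm_mul, norm_pow]
        calc ‖t‖ * ‖Q‖ ^ n ≤ ‖t‖ * 1 := mul_le_mul_of_nonneg_left (hQ1 n) (norm_nonneg t)
          _ = ‖t‖ := mul_one _
      calc ‖t * Q ^ n‖ ^ m / ‖qPoch (x * Q ^ n) Q m‖ ≤ ‖t‖ ^ m / c :=
            div_le_div₀ (by positivity) h2 hcpos h1
        _ = c⁻¹ * ‖t‖ ^ m := by rw [div_eq_mul_inv, mul_comm]
    have hmaj : Summable (fun m : ℕ => c⁻¹ * ‖t‖ ^ m) :=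
      (summable_geometric_of_lt_one (norm_nonneg t) ht).mul_left _
    have hsn : Summable (fun m : ℕ => ‖(t * Q ^ n) ^ m / qPoch (x * Q ^ n) Q m‖) :=
      Summable.of_nonneg_of_le (fun m => norm_nonneg _) hterm hmaj
    calc ‖fineS Q (x * Q ^ n) (t * Q ^ n)‖
        ≤ ∑' m : ℕ, ‖(t * Q ^ n) ^ m / qPoch (x * Q ^ n) Q m‖ := norm_tsum_le_tsum_norm hsn
      _ ≤ ∑' m : ℕ, c⁻¹ * ‖t‖ ^ m := Summable.tsum_le_tsum hterm hsn hmaj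
      _ = c⁻¹ * (1 - ‖t‖)⁻¹ := by
          rw [tsum_mul_left, tsum_geometric_of_lt_one (norm_nonneg t) ht]
  have hxt0 : (0:ℝ) ≤ ‖x * t‖ := norm_nonneg _
  have hxt1 : ‖x * t‖ < 1 := by
    rw [norm_mul]
    calc ‖x‖ * ‖t‖ ≤ 1 * ‖t‖ := mul_le_mul_of_nonneg_right hx.le (norm_nonneg t)
      _ = ‖t‖ := one_mul _
      _ < 1 := ht
  -- summability of fineT
  have hTsum : Summable (fineT Q x t) :=
    Summable.of_norm_bounded ((summable_geometric_of_lt_one hxt0 hxt1).mul_left _) hTbd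
  -- the remainder tends to zero
  set E : ℕ → ℂ := fun n =>
    fineT Q x t n * ((1 - t * Q ^ n) * fineS Q (x * Q ^ n) (t * Q ^ n)) with hE_def
  have hEbd : ∀ n : ℕ, ‖E n‖ ≤ (c⁻¹ * c⁻¹ * (2 * (c⁻¹ * (1 - ‖t‖)⁻¹))) * ‖x * t‖ ^ n := by
    intro n
    have h1 : ‖(1:ℂ) - t * Q ^ n‖ ≤ 2 := by
      calc ‖(1:ℂ) - t * Q ^ n‖ ≤ ‖(1:ℂ)‖ + ‖t * Q ^ n‖ := norm_sub_le _ _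
        _ ≤ 1 + 1 := by
            apply add_le_add (le_of_eq norm_one)
            rw [norm_mul, norm_pow]
            calc ‖t‖ * ‖Q‖ ^ n ≤ 1 * 1 :=
                  mul_le_mul ht.le (hQ1 n) (by positivity) zero_le_one
              _ = 1 := one_mul _
        _ = 2 := by norm_num
    calc ‖E n‖ = ‖fineT Q x t n‖ * (‖(1:ℂ) - t * Q ^ n‖ * ‖fineS Q (x * Q ^ n) (t * Q ^ n)‖) := by
          rw [hE_def]; simp [norm_mul]
      _ ≤ (c⁻¹ * c⁻¹ * ‖x * t‖ ^ n) * (2 * (c⁻¹ * (1 - ‖t‖)⁻¹)) := by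
          apply mul_le_mul (hTbd n) (mul_le_mul h1 (hSbd n) (norm_nonneg _) (by norm_num))
            (by positivity) (by positivity)
      _ = (c⁻¹ * c⁻¹ * (2 * (c⁻¹ * (1 - ‖t‖)⁻¹))) * ‖x * t‖ ^ n := by ring
  have hE0 : Tendsto E atTop (nhds 0) := by
    apply squeeze_zero_norm hEbd
    have := (tendsto_pow_atTop_nhds_zero_of_lt_one hxt0 hxt1).const_mul
      (c⁻¹ * c⁻¹ * (2 * (c⁻¹ * (1 - ‖t‖)⁻¹)))
    simpa using this
  -- partial sums tend to both limits
  have hps : Tendsto (fun n => ∑ k ∈ Finset.range n, fineT Q x t k) atTop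
      (nhds ((1 - t) * fineS Q x t)) := by
    have heq : (fun n => ∑ k ∈ Finset.range n, fineT Q x t k)
        = fun n => (1 - t) * fineS Q x t - E n := by
      funext n
      rw [hE_def]
      linear_combination -fine_iterate Q t x hQ ht hx n
    rw [heq]
    have := tendsto_const_nhds (x := (1 - t) * fineS Q x t) (f := atTop (α := ℕ)) |>.sub hE0
    simpa using this
  have hts : Tendsto (fun n => ∑ k ∈ Finset.range n, fineT Q x t k) atTop
      (nhds (∑' k, fineT Q x t k)) := hTsum.hasSum.tendsto_sum_nat
  have : (1 - t) * fineS Q x t = ∑' k, fineT Q x t k := tendsto_nhds_unique hps hts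
  rw [fineS] at this
  rw [this]
  exact tsum_congr fun n => by rw [fineT]

end Aux

/-- `(1+q) F(0,ζ;−q;q²) = R(ζ,−q;q²)`, i.e.
`(1+q) Σ_{n≥0} (−q)^n/(ζq²;q²)_n = Σ_{n≥0} (−qζ)^n q^{2n²}/((ζq²;q²)_n (−q³;q²)_n)`. -/
theorem fine_twelve_three (q ζ : ℂ) (hq0 : 0 < ‖q‖) (hq1 : ‖q‖ < 1)
    (hζ : ‖ζ‖ < 1) (hζq : ∀ m : ℕ, 1 ≤ m → ζ * q ^ (2 * m) ≠ 1) :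
    (1 + q) * ∑' n : ℕ, (-q) ^ n / qPoch (ζ * q ^ 2) (q ^ 2) n
      = ∑' n : ℕ, (-q * ζ) ^ n * q ^ (2 * n ^ 2) /
          (qPoch (ζ * q ^ 2) (q ^ 2) n * qPoch (-q ^ 3) (q ^ 2) n) := by
  have hq2 : ‖q ^ 2‖ < 1 := by
    rw [norm_pow]
    exact pow_lt_one₀ (norm_nonneg q) hq1 two_ne_zero
  have ht : ‖(-q : ℂ)‖ < 1 := by rw [norm_neg]; exact hq1
  have hx : ‖ζ * q ^ 2‖ < 1 := by
    rw [norm_mul]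
    calc ‖ζ‖ * ‖q ^ 2‖ ≤ ‖ζ‖ * 1 := mul_le_mul_of_nonneg_left hq2.le (norm_nonneg ζ)
      _ = ‖ζ‖ := mul_one _
      _ < 1 := hζ
  have key := rogers_fine (q ^ 2) (-q) (ζ * q ^ 2) hq2 ht hx
  have h1 : (1 : ℂ) - -q = 1 + q := by ring
  rw [h1] at key
  have h2 : -q * q ^ 2 = -q ^ 3 := by ring
  rw [h2] at key
  rw [key]
  apply tsum_congr
  intro n
  congr 1
  have h3 : ζ * q ^ 2 * -q = -q * ζ * q ^ 2 := by ring
  have h4 : n + n * (n - 1) = n ^ 2 := by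
    cases n with
    | zero => rfl
    | succ m => simp only [Nat.succ_sub_one]; ring
  rw [h3, mul_pow, mul_assoc, ← pow_add, h4, ← pow_mul]
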